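/- (Oscillatory integral lemma.) Let t₀ ≥ 0, n ≥ 1 a natural number, and [τ₋, τ₊] ⊂ [t₀, ∞). Suppose φ ∈ C²([τ₋,τ₊]) and ψ ∈ C¹([τ₋,τ₊]) satisfy |φ′(t)| ≥ φ₀ > 0, φ″(t) ≥ 0, and |ψ′(t)| ≤ Ψ₀/(1+t) on [τ₋,τ₊], where φ₀ and Ψ₀ are positive real numbers. Then for each choice of f, g ∈ {cos, sin}: |∫_{τ₋}^{τ₊} f(n φ(s)) g(ψ(s)) / (1+s) ds| ≤ (Ψ₀ + 4)/(n φ₀ (1+t₀)). -/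

import Mathlib

open Set intervalIntegral

set_option maxHeartbeats 1000000

lemma osc_aux (t₀ τm τp φ₀ Ψ₀ : ℝ) (n : ℕ) (hn : 1 ≤ n)
    (ht₀ : 0 ≤ t₀) (hτm : t₀ ≤ τm) (hτ : τm ≤ τp)
    (φ φ' φ'' ψ ψ' F f g g' : ℝ → ℝ)
    (hφ₀ : 0 < φ₀) (hΨ₀ : 0 < Ψ₀)
    (hφd : ∀ t ∈ Icc τm τp, HasDerivAt φ (φ' t) t)
    (hφd' : ∀ t ∈ Icc τm τp, HasDerivAt φ' (φ'' t) t)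
    (hφ''cont : ContinuousOn φ'' (Icc τm τp))
    (hψd : ∀ t ∈ Icc τm τp, HasDerivAt ψ (ψ' t) t)
    (hψ'cont : ContinuousOn ψ' (Icc τm τp))
    (hφ'lb : ∀ t ∈ Icc τm τp, φ₀ ≤ φ' t)
    (hψ'bd : ∀ t ∈ Icc τm τp, |ψ' t| ≤ Ψ₀ / (1 + t))
    (ε : ℝ) (hε : ε = 1 ∨ ε = -1)
    (hφ''sign : ∀ t ∈ Icc τm τp, 0 ≤ ε * φ'' t)
    (hF : ∀ x, HasDerivAt F (f x) x) (hFbd : ∀ x, |F x| ≤ 1)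
    (hfc : Continuous f)
    (hg : ∀ x, HasDerivAt g (g' x) x) (hgbd : ∀ x, |g x| ≤ 1)
    (hg'bd : ∀ x, |g' x| ≤ 1) (hg'c : Continuous g') :
    |∫ s in τm..τp, f ((n : ℝ) * φ s) * g (ψ s) / (1 + s)|
      ≤ (Ψ₀ + 4) / ((n : ℝ) * φ₀ * (1 + t₀)) := by
  set N : ℝ := (n : ℝ) with hNdef
  have hN1 : (1:ℝ) ≤ N := by rw [hNdef]; exact_mod_cast hn
  have hN0 : 0 < N := lt_of_lt_of_le one_pos hN1
  have h1t₀ : 0 < 1 + t₀ := by linarith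
  have h1s : ∀ s ∈ Icc τm τp, 1 + t₀ ≤ 1 + s := fun s hs => by
    have := hs.1; linarith
  have h1spos : ∀ s ∈ Icc τm τp, 0 < 1 + s := fun s hs => lt_of_lt_of_le h1t₀ (h1s s hs)
  have hφ'pos : ∀ s ∈ Icc τm τp, 0 < φ' s := fun s hs => lt_of_lt_of_le hφ₀ (hφ'lb s hs)
  have hNφ₀ : 0 < N * φ₀ := mul_pos hN0 hφ₀
  -- continuity
  have hφc : ContinuousOn φ (Icc τm τp) := fun t ht => (hφd t ht).continuousAt.continuousWithinAt
  have hφ'c : ContinuousOn φ' (Icc τm τp) := fun t ht => (hφd' t ht).continuousAt.continuousWithinAt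
  have hψc : ContinuousOn ψ (Icc τm τp) := fun t ht => (hψd t ht).continuousAt.continuousWithinAt
  have hgc : Continuous g := by
    have : Differentiable ℝ g := fun x => (hg x).differentiableAt
    exact this.continuous
  -- definitions
  set v : ℝ → ℝ := fun s => F (N * φ s) with hvdef
  set v' : ℝ → ℝ := fun s => N * φ' s * f (N * φ s) with hv'def
  set w : ℝ → ℝ := fun s => g (ψ s) / ((1 + s) * (N * φ' s)) with hwdef
  set w' : ℝ → ℝ := fun s =>
      g' (ψ s) * ψ' s / ((1 + s) * (N * φ' s))
      - g (ψ s) / ((1 + s) ^ 2 * (N * φ' s))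
      - g (ψ s) * φ'' s / ((1 + s) * N * (φ' s) ^ 2) with hw'def
  have huIcc : uIcc τm τp = Icc τm τp := uIcc_of_le hτ
  -- derivative of v
  have hv : ∀ s ∈ Icc τm τp, HasDerivAt v (v' s) s := by
    intro s hs
    have h1 : HasDerivAt (fun t => N * φ t) (N * φ' s) s := (hφd s hs).const_mul N
    have := (hF (N * φ s)).comp s h1
    convert this using 1
    · rfl
    · rfl
    · rfl
    simp [hv'def, mul_comm]
  -- derivative of w
  have hw : ∀ s ∈ Icc τm τp, HasDerivAt w (w' s) s := by
    intro s hs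
    have hnum : HasDerivAt (fun t => g (ψ t)) (g' (ψ s) * ψ' s) s := (hg (ψ s)).comp s (hψd s hs)
    have hden : HasDerivAt (fun t => (1 + t) * (N * φ' t))
        (1 * (N * φ' s) + (1 + s) * (N * φ'' s)) s := by
      exact ((hasDerivAt_id s).const_add 1).mul ((hφd' s hs).const_mul N)
    have hne : (1 + s) * (N * φ' s) ≠ 0 :=
      (mul_pos (h1spos s hs) (mul_pos hN0 (hφ'pos s hs))).ne'
    have := hnum.div hden hne
    convert this using 1
    · rfl
    · rfl
    · rfl
    have hs1 : (1 + s) ≠ 0 := (h1spos s hs).ne'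
    have hs2 : φ' s ≠ 0 := (hφ'pos s hs).ne'
    simp only [hw'def]
    field_simp
    ring
  -- integrability
  have hv'int : IntervalIntegrable v' MeasureTheory.volume τm τp := by
    apply ContinuousOn.intervalIntegrable_of_Icc hτ
    exact (continuousOn_const.mul hφ'c).mul (hfc.comp_continuousOn (continuousOn_const.mul hφc))
  have hw'cont : ContinuousOn w' (Icc τm τp) := by
    have hd1 : ContinuousOn (fun s => (1 + s) * (N * φ' s)) (Icc τm τp) :=
      (continuousOn_const.add continuousOn_id).mul (continuousOn_const.mul hφ'c)
    have hd2 : ContinuousOn (fun s : ℝ => (1 + s) ^ 2 * (N * φ' s)) (Icc τm τp) :=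
      (((continuousOn_const.add continuousOn_id).pow 2)).mul (continuousOn_const.mul hφ'c)
    have hd3 : ContinuousOn (fun s : ℝ => (1 + s) * N * (φ' s) ^ 2) (Icc τm τp) :=
      (((continuousOn_const.add continuousOn_id).mul continuousOn_const)).mul (hφ'c.pow 2)
    refine ContinuousOn.sub (ContinuousOn.sub ?_ ?_) ?_
    · exact ((hg'c.comp_continuousOn hψc).mul hψ'cont).div hd1
        (fun s hs => (mul_pos (h1spos s hs) (mul_pos hN0 (hφ'pos s hs))).ne')
    · exact (hgc.comp_continuousOn hψc).div hd2
        (fun s hs => (mul_pos (pow_pos (h1spos s hs) 2) (mul_pos hN0 (hφ'pos s hs))).ne')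
    · exact ((hgc.comp_continuousOn hψc).mul hφ''cont).div hd3
        (fun s hs => (mul_pos (mul_pos (h1spos s hs) hN0) (pow_pos (hφ'pos s hs) 2)).ne')
  have hw'int : IntervalIntegrable w' MeasureTheory.volume τm τp :=
    hw'cont.intervalIntegrable_of_Icc hτ
  -- integration by parts
  have hibp : ∫ s in τm..τp, w s * v' s
      = w τp * v τp - w τm * v τm - ∫ s in τm..τp, w' s * v s := by
    apply integral_mul_deriv_eq_deriv_mul
    · intro x hx; exact hw x (huIcc ▸ hx)
    · intro x hx; exact hv x (huIcc ▸ hx)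
    · exact hw'int
    · exact hv'int
  -- rewrite integrand
  have hcongr : ∫ s in τm..τp, f (N * φ s) * g (ψ s) / (1 + s) = ∫ s in τm..τp, w s * v' s := by
    apply integral_congr
    intro s hs
    rw [huIcc] at hs
    have hs1 : (1 + s) ≠ 0 := (h1spos s hs).ne'
    have hs2 : φ' s ≠ 0 := (hφ'pos s hs).ne'
    simp only [hwdef, hv'def]
    field_simp
  -- bound on w
  have hwbd : ∀ s ∈ Icc τm τp, |w s| ≤ 1 / ((1 + t₀) * (N * φ₀)) := by
    intro s hs
    simp only [hwdef]
    rw [abs_div, abs_of_pos (mul_pos (h1spos s hs) (mul_pos hN0 (hφ'pos s hs)))]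
    have hNle : N * φ₀ ≤ N * φ' s := by
      have := hφ'lb s hs; nlinarith
    apply div_le_div₀ (by positivity) (hgbd _) (by positivity)
    exact mul_le_mul (h1s s hs) hNle hNφ₀.le (h1spos s hs).le
  -- majorant
  set M : ℝ → ℝ := fun s =>
      (Ψ₀ + 1) / ((N * φ₀) * (1 + s) ^ 2) + ε * φ'' s / ((1 + t₀) * N * (φ' s) ^ 2) with hMdef
  have hεsq : ε * ε = 1 := by rcases hε with h | h <;> simp [h]
  have hε0 : ε ≠ 0 := by rcases hε with h | h <;> simp [h]
  -- pointwise bound |w' s * v s| ≤ M s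
  have hptwise : ∀ s ∈ Icc τm τp, |w' s * v s| ≤ M s := by
    intro s hs
    have h1 : (0:ℝ) < 1 + s := h1spos s hs
    have h2 : 0 < φ' s := hφ'pos s hs
    have hb1 : |g' (ψ s) * ψ' s / ((1 + s) * (N * φ' s))| ≤ Ψ₀ / ((N * φ₀) * (1 + s) ^ 2) := by
      rw [abs_div, abs_mul, abs_of_pos (mul_pos h1 (mul_pos hN0 h2))]
      calc |g' (ψ s)| * |ψ' s| / ((1 + s) * (N * φ' s))
          ≤ 1 * (Ψ₀ / (1 + s)) / ((1 + s) * (N * φ₀)) := by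
            have hNle : N * φ₀ ≤ N * φ' s := by
              have := hφ'lb s hs; nlinarith
            apply div_le_div₀ (by positivity)
              (mul_le_mul (hg'bd _) (hψ'bd s hs) (abs_nonneg _) zero_le_one)
              (by positivity)
            exact mul_le_mul_of_nonneg_left hNle h1.le
        _ = Ψ₀ / ((N * φ₀) * (1 + s) ^ 2) := by
            rw [one_mul, div_div]
            congr 1
            ring
    have hb2 : |g (ψ s) / ((1 + s) ^ 2 * (N * φ' s))| ≤ 1 / ((N * φ₀) * (1 + s) ^ 2) := by
      rw [abs_div, abs_of_pos (mul_pos (pow_pos h1 2) (mul_pos hN0 h2))]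
      calc |g (ψ s)| / ((1 + s) ^ 2 * (N * φ' s))
          ≤ 1 / ((1 + s) ^ 2 * (N * φ₀)) := by
            have hNle : N * φ₀ ≤ N * φ' s := by
              have := hφ'lb s hs; nlinarith
            apply div_le_div₀ (by positivity) (hgbd _) (by positivity)
            exact mul_le_mul_of_nonneg_left hNle (by positivity)
        _ = 1 / ((N * φ₀) * (1 + s) ^ 2) := by ring_nf
    have hb3 : |g (ψ s) * φ'' s / ((1 + s) * N * (φ' s) ^ 2)|
        ≤ ε * φ'' s / ((1 + t₀) * N * (φ' s) ^ 2) := by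
      rw [abs_div, abs_mul, abs_of_pos (mul_pos (mul_pos h1 hN0) (pow_pos h2 2))]
      have habs : |φ'' s| = ε * φ'' s := by
        rcases hε with h | h
        · rw [h, one_mul]; exact abs_of_nonneg (by have := hφ''sign s hs; rw [h] at this; linarith)
        · rw [h]; have := hφ''sign s hs; rw [h] at this
          rw [abs_of_nonpos (by linarith)]; ring
      calc |g (ψ s)| * |φ'' s| / ((1 + s) * N * (φ' s) ^ 2)
          ≤ 1 * (ε * φ'' s) / ((1 + t₀) * N * (φ' s) ^ 2) := by
            apply div_le_div₀
            · have := hφ''sign s hs; positivity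
            · rw [habs]; exact mul_le_mul_of_nonneg_right (hgbd _) (habs ▸ abs_nonneg _)
            · positivity
            · exact mul_le_mul_of_nonneg_right
                (mul_le_mul_of_nonneg_right (h1s s hs) hN0.le) (sq_nonneg _)
        _ = ε * φ'' s / ((1 + t₀) * N * (φ' s) ^ 2) := by rw [one_mul]
    calc |w' s * v s| = |w' s| * |v s| := abs_mul _ _
      _ ≤ |w' s| * 1 := mul_le_mul_of_nonneg_left (hFbd _) (abs_nonneg _)
      _ = |w' s| := mul_one _
      _ ≤ |g' (ψ s) * ψ' s / ((1 + s) * (N * φ' s))|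
          + |g (ψ s) / ((1 + s) ^ 2 * (N * φ' s))|
          + |g (ψ s) * φ'' s / ((1 + s) * N * (φ' s) ^ 2)| := by
            simp only [hw'def]
            exact (abs_sub _ _).trans (by gcongr; exact abs_sub _ _)
      _ ≤ Ψ₀ / ((N * φ₀) * (1 + s) ^ 2) + 1 / ((N * φ₀) * (1 + s) ^ 2)
          + ε * φ'' s / ((1 + t₀) * N * (φ' s) ^ 2) := by gcongr
      _ = M s := by simp only [hMdef]; ring
  -- M is integrable
  have hMcont : ContinuousOn M (Icc τm τp) := by
    apply ContinuousOn.add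
    · exact continuousOn_const.div
        (continuousOn_const.mul ((continuousOn_const.add continuousOn_id).pow 2))
        (fun s hs => (mul_pos hNφ₀ (pow_pos (h1spos s hs) 2)).ne')
    · exact (continuousOn_const.mul hφ''cont).div
        (continuousOn_const.mul (hφ'c.pow 2))
        (fun s hs => (mul_pos (mul_pos h1t₀ hN0) (pow_pos (hφ'pos s hs) 2)).ne')
  have hMint : IntervalIntegrable M MeasureTheory.volume τm τp :=
    hMcont.intervalIntegrable_of_Icc hτ
  -- FTC for M
  set Φ : ℝ → ℝ := fun s => -(Ψ₀ + 1) / ((N * φ₀) * (1 + s)) - ε / ((1 + t₀) * (N * φ' s))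
    with hΦdef
  have hΦd : ∀ s ∈ Icc τm τp, HasDerivAt Φ (M s) s := by
    intro s hs
    have h1 : (0:ℝ) < 1 + s := h1spos s hs
    have h2 : 0 < φ' s := hφ'pos s hs
    have hA : HasDerivAt (fun t => -(Ψ₀ + 1) / ((N * φ₀) * (1 + t)))
        ((0 * ((N * φ₀) * (1 + s)) - -(Ψ₀ + 1) * ((N * φ₀) * 1)) / ((N * φ₀) * (1 + s)) ^ 2) s := by
      exact (hasDerivAt_const s (-(Ψ₀ + 1))).div
        (((hasDerivAt_id s).const_add 1).const_mul (N * φ₀))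
        (mul_pos hNφ₀ h1).ne'
    have hB : HasDerivAt (fun t => ε / ((1 + t₀) * (N * φ' t)))
        ((0 * ((1 + t₀) * (N * φ' s)) - ε * ((1 + t₀) * (N * φ'' s)))
          / ((1 + t₀) * (N * φ' s)) ^ 2) s := by
      exact (hasDerivAt_const s ε).div
        (((hφd' s hs).const_mul N).const_mul (1 + t₀))
        (mul_pos h1t₀ (mul_pos hN0 h2)).ne'
    have := hA.sub hB
    convert this using 1
    · rfl
    · rfl
    · rfl
    simp only [hMdef]
    field_simp
    ring
  have hMeq : ∫ s in τm..τp, M s = Φ τp - Φ τm := by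
    apply integral_eq_sub_of_hasDerivAt
    · intro x hx; exact hΦd x (huIcc ▸ hx)
    · exact hMint
  -- bound Φ τp - Φ τm
  have hΦbd : Φ τp - Φ τm ≤ (Ψ₀ + 2) / ((N * φ₀) * (1 + t₀)) := by
    have hmem_m : τm ∈ Icc τm τp := ⟨le_refl _, hτ⟩
    have hmem_p : τp ∈ Icc τm τp := ⟨hτ, le_refl _⟩
    have h1m : (0:ℝ) < 1 + τm := h1spos τm hmem_m
    have h1p : (0:ℝ) < 1 + τp := h1spos τp hmem_p
    have hφ'm : φ₀ ≤ φ' τm := hφ'lb τm hmem_m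
    have hφ'p : φ₀ ≤ φ' τp := hφ'lb τp hmem_p
    have key1 : (Ψ₀ + 1) / ((N * φ₀) * (1 + τm)) ≤ (Ψ₀ + 1) / ((N * φ₀) * (1 + t₀)) := by
      have hx : (N * φ₀) * (1 + t₀) ≤ (N * φ₀) * (1 + τm) := by nlinarith [h1s τm hmem_m]
      exact div_le_div₀ (by positivity) (le_refl _) (mul_pos hNφ₀ h1t₀) hx
    have key2 : 0 < (Ψ₀ + 1) / ((N * φ₀) * (1 + τp)) := by positivity
    have e1 : (0:ℝ) < N * φ' τm := mul_pos hN0 (lt_of_lt_of_le hφ₀ hφ'm)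
    have e2 : (0:ℝ) < N * φ' τp := mul_pos hN0 (lt_of_lt_of_le hφ₀ hφ'p)
    have e3 : 1 / ((1 + t₀) * (N * φ' τm)) ≤ 1 / ((1 + t₀) * (N * φ₀)) := by gcongr
    have e4 : 1 / ((1 + t₀) * (N * φ' τp)) ≤ 1 / ((1 + t₀) * (N * φ₀)) := by gcongr
    have e5 : 0 < 1 / ((1 + t₀) * (N * φ' τm)) := by positivity
    have e6 : 0 < 1 / ((1 + t₀) * (N * φ' τp)) := by positivity
    have hsplit : Φ τp - Φ τm
        = ((Ψ₀ + 1) / ((N * φ₀) * (1 + τm)) - (Ψ₀ + 1) / ((N * φ₀) * (1 + τp)))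
          + ε * (1 / ((1 + t₀) * (N * φ' τm)) - 1 / ((1 + t₀) * (N * φ' τp))) := by
      simp only [hΦdef]
      ring
    have hεpart : ε * (1 / ((1 + t₀) * (N * φ' τm)) - 1 / ((1 + t₀) * (N * φ' τp)))
        ≤ 1 / ((1 + t₀) * (N * φ₀)) := by
      rcases hε with h | h
      · rw [h, one_mul]; linarith
      · rw [h]; linarith
    have hfin : 1 / ((1 + t₀) * (N * φ₀)) = 1 / ((N * φ₀) * (1 + t₀)) := by ring_nf
    rw [hsplit]
    rw [hfin] at hεpart
    have : (Ψ₀ + 1) / ((N * φ₀) * (1 + t₀)) + 1 / ((N * φ₀) * (1 + t₀))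
        = (Ψ₀ + 2) / ((N * φ₀) * (1 + t₀)) := by
      rw [← add_div]
      ring_nf
    linarith
  -- bound |∫ w' v|
  have hFc : Continuous F := by
    have : Differentiable ℝ F := fun x => (hF x).differentiableAt
    exact this.continuous
  have hwvint : IntervalIntegrable (fun s => |w' s * v s|) MeasureTheory.volume τm τp := by
    apply ContinuousOn.intervalIntegrable_of_Icc hτ
    exact (hw'cont.mul (hFc.comp_continuousOn (continuousOn_const.mul hφc))).abs
  have hintbd : |∫ s in τm..τp, w' s * v s| ≤ (Ψ₀ + 2) / ((N * φ₀) * (1 + t₀)) := by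
    calc |∫ s in τm..τp, w' s * v s| ≤ ∫ s in τm..τp, |w' s * v s| :=
          abs_integral_le_integral_abs hτ
      _ ≤ ∫ s in τm..τp, M s := integral_mono_on hτ hwvint hMint hptwise
      _ = Φ τp - Φ τm := hMeq
      _ ≤ (Ψ₀ + 2) / ((N * φ₀) * (1 + t₀)) := hΦbd
  have hmem_m : τm ∈ Icc τm τp := ⟨le_refl _, hτ⟩
  have hmem_p : τp ∈ Icc τm τp := ⟨hτ, le_refl _⟩
  have hbdm : |w τm * v τm| ≤ 1 / ((1 + t₀) * (N * φ₀)) := by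
    rw [abs_mul]
    calc |w τm| * |v τm| ≤ (1 / ((1 + t₀) * (N * φ₀))) * 1 :=
          mul_le_mul (hwbd τm hmem_m) (hFbd _) (abs_nonneg _) (by positivity)
      _ = 1 / ((1 + t₀) * (N * φ₀)) := mul_one _
  have hbdp : |w τp * v τp| ≤ 1 / ((1 + t₀) * (N * φ₀)) := by
    rw [abs_mul]
    calc |w τp| * |v τp| ≤ (1 / ((1 + t₀) * (N * φ₀))) * 1 :=
          mul_le_mul (hwbd τp hmem_p) (hFbd _) (abs_nonneg _) (by positivity)
      _ = 1 / ((1 + t₀) * (N * φ₀)) := mul_one _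
  have heqden : 1 / ((1 + t₀) * (N * φ₀)) = 1 / ((N * φ₀) * (1 + t₀)) := by ring_nf
  have hfinal : 2 * (1 / ((N * φ₀) * (1 + t₀))) + (Ψ₀ + 2) / ((N * φ₀) * (1 + t₀))
      = (Ψ₀ + 4) / (N * φ₀ * (1 + t₀)) := by
    rw [mul_one_div, ← add_div]
    ring_nf
  calc |∫ s in τm..τp, f (N * φ s) * g (ψ s) / (1 + s)|
      = |w τp * v τp - w τm * v τm - ∫ s in τm..τp, w' s * v s| := by rw [hcongr, hibp]
    _ ≤ |w τp * v τp| + |w τm * v τm| + |∫ s in τm..τp, w' s * v s| :=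
        (abs_sub _ _).trans (by gcongr; exact abs_sub _ _)
    _ ≤ (Ψ₀ + 4) / (N * φ₀ * (1 + t₀)) := by
        rw [heqden] at hbdm hbdp
        linarith
set_option maxHeartbeats 1000000

/-- Oscillatory integral lemma. -/
theorem oscillatory_integral_lemma
    (t₀ τm τp φ₀ Ψ₀ : ℝ) (n : ℕ) (hn : 1 ≤ n)
    (ht₀ : 0 ≤ t₀) (hτm : t₀ ≤ τm) (hτ : τm ≤ τp)
    (φ φ' φ'' ψ ψ' : ℝ → ℝ)
    (hφ₀ : 0 < φ₀) (hΨ₀ : 0 < Ψ₀)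
    (hφd : ∀ t ∈ Icc τm τp, HasDerivAt φ (φ' t) t)
    (hφd' : ∀ t ∈ Icc τm τp, HasDerivAt φ' (φ'' t) t)
    (hφ''cont : ContinuousOn φ'' (Icc τm τp))
    (hψd : ∀ t ∈ Icc τm τp, HasDerivAt ψ (ψ' t) t)
    (hψ'cont : ContinuousOn ψ' (Icc τm τp))
    (hφ'lb : ∀ t ∈ Icc τm τp, φ₀ ≤ |φ' t|)
    (hφ''nonneg : ∀ t ∈ Icc τm τp, 0 ≤ φ'' t)
    (hψ'bd : ∀ t ∈ Icc τm τp, |ψ' t| ≤ Ψ₀ / (1 + t)) :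
    ∀ f ∈ ({Real.cos, Real.sin} : Set (ℝ → ℝ)),
    ∀ g ∈ ({Real.cos, Real.sin} : Set (ℝ → ℝ)),
      |∫ s in τm..τp, f ((n : ℝ) * φ s) * g (ψ s) / (1 + s)|
        ≤ (Ψ₀ + 4) / ((n : ℝ) * φ₀ * (1 + t₀)) := by
  intro f hf g hg
  simp only [Set.mem_insert_iff, Set.mem_singleton_iff] at hf hg
  have hφ'c : ContinuousOn φ' (Icc τm τp) :=
    fun t ht => (hφd' t ht).continuousAt.continuousWithinAt
  have hdich : ∀ t ∈ Icc τm τp, φ₀ ≤ φ' t ∨ φ' t ≤ -φ₀ := by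
    intro t ht
    rcases le_abs.mp (hφ'lb t ht) with h | h
    · exact Or.inl h
    · exact Or.inr (by linarith)
  have hsign : (∀ t ∈ Icc τm τp, φ₀ ≤ φ' t) ∨ (∀ t ∈ Icc τm τp, φ' t ≤ -φ₀) := by
    have hmem_m : τm ∈ Icc τm τp := ⟨le_refl _, hτ⟩
    by_cases hc : φ₀ ≤ φ' τm
    · left
      intro t ht
      by_contra hlt
      push_neg at hlt
      have h2 : φ' t ≤ -φ₀ := (hdich t ht).resolve_left (by linarith)
      have hsub : Icc τm t ⊆ Icc τm τp := Icc_subset_Icc le_rfl ht.2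
      have hIVT := intermediate_value_Icc' ht.1 (hφ'c.mono hsub)
      have h0 : (0:ℝ) ∈ Icc (φ' t) (φ' τm) := ⟨by linarith, by linarith⟩
      obtain ⟨s, hsmem, hs0⟩ := hIVT h0
      have := hφ'lb s (hsub hsmem)
      rw [hs0, abs_zero] at this
      linarith
    · right
      intro t ht
      have hcm : φ' τm ≤ -φ₀ := (hdich τm hmem_m).resolve_left hc
      by_contra hlt
      push_neg at hlt
      have h2 : φ₀ ≤ φ' t := (hdich t ht).resolve_right (by linarith)
      have hsub : Icc τm t ⊆ Icc τm τp := Icc_subset_Icc le_rfl ht.2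
      have hIVT := intermediate_value_Icc ht.1 (hφ'c.mono hsub)
      have h0 : (0:ℝ) ∈ Icc (φ' τm) (φ' t) := ⟨by linarith, by linarith⟩
      obtain ⟨s, hsmem, hs0⟩ := hIVT h0
      have := hφ'lb s (hsub hsmem)
      rw [hs0, abs_zero] at this
      linarith
  obtain ⟨F, hF, hFbd⟩ : ∃ F : ℝ → ℝ, (∀ x, HasDerivAt F (f x) x) ∧ (∀ x, |F x| ≤ 1) := by
    rcases hf with rfl | rfl
    · exact ⟨Real.sin, Real.hasDerivAt_sin,
        fun x => abs_le.mpr ⟨Real.neg_one_le_sin x, Real.sin_le_one x⟩⟩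
    · refine ⟨fun x => -Real.cos x, fun x => ?_, fun x => ?_⟩
      · have h := (Real.hasDerivAt_cos x).neg; rw [neg_neg] at h; exact h
      · rw [abs_neg]; exact abs_le.mpr ⟨Real.neg_one_le_cos x, Real.cos_le_one x⟩
  have hfc : Continuous f := by
    rcases hf with rfl | rfl
    exacts [Real.continuous_cos, Real.continuous_sin]
  obtain ⟨g', hgd, hg'bd, hg'c⟩ : ∃ g' : ℝ → ℝ, (∀ x, HasDerivAt g (g' x) x)
      ∧ (∀ x, |g' x| ≤ 1) ∧ Continuous g' := by
    rcases hg with rfl | rfl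
    · refine ⟨fun x => -Real.sin x, Real.hasDerivAt_cos, fun x => ?_, Real.continuous_sin.neg⟩
      rw [abs_neg]; exact abs_le.mpr ⟨Real.neg_one_le_sin x, Real.sin_le_one x⟩
    · exact ⟨Real.cos, Real.hasDerivAt_sin,
        fun x => abs_le.mpr ⟨Real.neg_one_le_cos x, Real.cos_le_one x⟩, Real.continuous_cos⟩
  have hgbd : ∀ x, |g x| ≤ 1 := by
    rcases hg with rfl | rfl
    · exact fun x => abs_le.mpr ⟨Real.neg_one_le_cos x, Real.cos_le_one x⟩
    · exact fun x => abs_le.mpr ⟨Real.neg_one_le_sin x, Real.sin_le_one x⟩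
  rcases hsign with hpos | hneg
  · exact osc_aux t₀ τm τp φ₀ Ψ₀ n hn ht₀ hτm hτ φ φ' φ'' ψ ψ' F f g g' hφ₀ hΨ₀
      hφd hφd' hφ''cont hψd hψ'cont hpos hψ'bd 1 (Or.inl rfl)
      (fun t ht => by simpa using hφ''nonneg t ht) hF hFbd hfc hgd hgbd hg'bd hg'c
  · have h2 := osc_aux t₀ τm τp φ₀ Ψ₀ n hn ht₀ hτm hτ
      (fun s => -φ s) (fun s => -φ' s) (fun s => -φ'' s) ψ ψ'
      (fun x => -F (-x)) (fun x => f (-x)) g g' hφ₀ hΨ₀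
      (fun t ht => (hφd t ht).neg)
      (fun t ht => (hφd' t ht).neg)
      hφ''cont.neg hψd hψ'cont
      (fun t ht => by have := hneg t ht; show φ₀ ≤ -φ' t; linarith)
      hψ'bd (-1) (Or.inr rfl)
      (fun t ht => by have := hφ''nonneg t ht; simp only [neg_mul, one_mul, neg_neg]; linarith)
      (fun x => by
        have h := ((hF (-x)).comp x (hasDerivAt_neg x)).neg
        have h2 : f (-x) = -(f (-x) * -1) := by ring
        rw [h2]; exact h)
      (fun x => by rw [abs_neg]; exact hFbd (-x))
      (hfc.comp continuous_neg)
      hgd hgbd hg'bd hg'c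
    simpa only [mul_neg, neg_neg] using h2
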